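/- Let p ≥ 2 be an integer. Let X, X'_1, …, X'_p be mutually independent random elements (with values in measurable spaces E and E' respectively), where X'_1, …, X'_p are identically distributed. Let f : E × E' → ℝ be measurable and set Y_i = f(X, X'_i) for i = 1, …, p. Assume Y_1 ∈ L^p. Then E[(E[Y_1 | X] − E[Y_1])^p] = E[∏_{i=1}^p (Y_i − E[Y_1])]. -/

import Mathlib

open MeasureTheory ProbabilityTheory Filter
open scoped ENNReal

/-- **Pick-and-Freeze representation of the generalized Sobol numerator of order `p`.**
If `X, X'_1, …, X'_p` are mutually independent, `X'_1, …, X'_p` identically distributed,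
and `Y_i = f (X, X'_i)` with `Y_1 ∈ L^p`, then
`E[(E[Y_1 | X] − E[Y_1])^p] = E[∏_{i=1}^p (Y_i − E[Y_1])]`. -/
theorem pick_and_freeze_higher_order
    {Ω : Type*} {E E' : Type u} [MeasurableSpace Ω] [mE : MeasurableSpace E]
    [mE' : MeasurableSpace E'] (P : Measure Ω) [IsProbabilityMeasure P]
    (p : ℕ) (hp : 2 ≤ p)
    (X : Ω → E) (X' : Fin p → Ω → E')
    (hX : Measurable X) (hX' : ∀ i, Measurable (X' i))
    (hindep : iIndepFun
      (β := fun i : Option (Fin p) => Option.elim i E fun _ => E')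
      (m := fun i => match i with | none => mE | some _ => mE')
      (fun i => match i with | none => X | some j => X' j) P)
    (hid : ∀ i j, Measure.map (X' i) P = Measure.map (X' j) P)
    (f : E × E' → ℝ) (hf : Measurable f)
    (Y : Fin p → Ω → ℝ) (hYdef : ∀ i ω, Y i ω = f (X ω, X' i ω))
    (i0 : Fin p) (hi0 : (i0 : ℕ) = 0)
    (hLp : MemLp (Y i0) p P) :
    ∫ ω, ((MeasureTheory.condExp (MeasurableSpace.comap X mE) P (Y i0)) ω
        - ∫ ω', Y i0 ω' ∂P) ^ p ∂P
      = ∫ ω, ∏ i, (Y i ω - ∫ ω', Y i0 ω' ∂P) ∂P := by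
  classical
  set β' : Option (Fin p) → Type u := fun i => Option.elim i E fun _ => E' with hβ'
  letI mβ : ∀ i, MeasurableSpace (β' i) := fun i => match i with | none => mE | some _ => mE'
  set F : ∀ i, Ω → β' i := fun i => match i with | none => X | some j => X' j with hF
  have hindep' : iIndepFun (m := mβ) F P := hindep
  have hmeasF : ∀ i, Measurable (F i) := by
    intro i; cases i with
    | none => exact hX
    | some j => exact hX' j
  set m : ℝ := ∫ ω', Y i0 ω' ∂P with hm
  set μ : Measure E := P.map X with hμ
  set ν : Measure E' := P.map (X' i0) with hν
  haveI hμprob : IsProbabilityMeasure μ := Measure.isProbabilityMeasure_map hX.aemeasurable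
  haveI hνprob : IsProbabilityMeasure ν := Measure.isProbabilityMeasure_map (hX' i0).aemeasurable
  set V : Ω → Fin p → E' := fun ω i => X' i ω with hV
  have hVm : Measurable V := measurable_pi_lambda _ hX'
  set T2 : Ω → E × (Fin p → E') := fun ω => (X ω, V ω) with hT2
  have hT2m : Measurable T2 := hX.prodMk hVm
  have hYm : ∀ j, Measurable (Y j) := by
    intro j
    have h1 : Measurable fun ω => f (X ω, X' j ω) := hf.comp (hX.prodMk (hX' j))
    have h2 : Y j = fun ω => f (X ω, X' j ω) := funext fun ω => hYdef j ω
    rw [h2]; exact h1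
  -- independence of X from the vector V
  have hXV : IndepFun X V P := by
    have h1 := hindep'.indepFun_finset {none} (Finset.univ.image some)
      (by simp [Finset.disjoint_left]) hmeasF
    have hφ : Measurable (fun w : ∀ i : ({none} : Finset (Option (Fin p))), β' i.1 =>
        w ⟨none, by simp⟩) := measurable_pi_apply _
    have hψ : Measurable (fun w : ∀ i : (Finset.univ.image some : Finset (Option (Fin p))), β' i.1 =>
        (fun j : Fin p => w ⟨some j, by simp⟩)) :=
      measurable_pi_lambda _ fun j => measurable_pi_apply _
    exact h1.comp hφ hψ
  -- law of V is the product measure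
  have hmapV : Measure.pi (fun _ : Fin p => ν) = P.map V := by
    refine Measure.pi_eq fun s hs => ?_
    rw [Measure.map_apply hVm (MeasurableSet.univ_pi hs)]
    have hpre : V ⁻¹' Set.univ.pi s = ⋂ j, X' j ⁻¹' s j := by
      ext ω; simp [V, Set.mem_pi]
    have hS : (⋂ j, X' j ⁻¹' s j)
        = ⋂ i ∈ (Finset.univ.image some : Finset (Option (Fin p))),
            (fun i : Option (Fin p) => match i with
              | none => Set.univ
              | some j => X' j ⁻¹' s j) i := by
      ext ω; simp
    rw [hpre, hS, hindep'.meas_biInter (s := fun i : Option (Fin p) => match i with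
        | none => Set.univ
        | some j => X' j ⁻¹' s j) ?_]
    · rw [Finset.prod_image (by simp; exact Option.some_injective _)]
      refine Finset.prod_congr rfl fun j _ => ?_
      rw [← Measure.map_apply (hX' j) (hs j), hid j i0]
    · rintro (_ | j) hi
      · simp at hi
      · exact ⟨s j, hs j, rfl⟩
  -- law of T2
  have hmapT2 : P.map T2 = μ.prod (Measure.pi fun _ : Fin p => ν) := by
    rw [hmapV]
    exact (indepFun_iff_map_prod_eq_prod_map_map hX.aemeasurable hVm.aemeasurable).1 hXV
  -- law of each pair (X, X' j)
  have hpair : ∀ j, P.map (fun ω => (X ω, X' j ω)) = μ.prod ν := by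
    intro j
    have hind : IndepFun X (X' j) P :=
      hindep'.indepFun (i := (none : Option (Fin p))) (j := some j) (by simp)
    rw [(indepFun_iff_map_prod_eq_prod_map_map hX.aemeasurable (hX' j).aemeasurable).1 hind,
      hid j i0]
  -- MemLp facts
  have hfLp : MemLp f p (μ.prod ν) := by
    rw [← hpair i0]
    refine (memLp_map_measure_iff hf.aestronglyMeasurable
      (hX.prodMk (hX' i0)).aemeasurable).2 ?_
    have h2 : (f ∘ fun ω => (X ω, X' i0 ω)) = Y i0 := funext fun ω => (hYdef i0 ω).symm
    rw [h2]; exact hLp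
  have hYLp : ∀ j, MemLp (Y j) p P := by
    intro j
    have h1 : MemLp f p (P.map (fun ω => (X ω, X' j ω))) := by rw [hpair j]; exact hfLp
    have h2 := (memLp_map_measure_iff hf.aestronglyMeasurable
      (hX.prodMk (hX' j)).aemeasurable).1 h1
    have h3 : (f ∘ fun ω => (X ω, X' j ω)) = Y j := funext fun ω => (hYdef j ω).symm
    rwa [h3] at h2
  have hp1 : (1 : ℝ≥0∞) ≤ (p : ℝ≥0∞) := by
    exact_mod_cast le_trans one_le_two hp
  have hfint : Integrable f (μ.prod ν) := hfLp.integrable hp1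
  have hYint : ∀ j, Integrable (Y j) P := fun j => (hYLp j).integrable hp1
  -- the conditional mean function
  set g : E → ℝ := fun x => ∫ y, f (x, y) ∂ν with hg
  have hgm : StronglyMeasurable g := hf.stronglyMeasurable.integral_prod_right'
  have hgint : Integrable g μ := hfint.integral_prod_left
  have hgXint : Integrable (fun ω => g (X ω)) P :=
    (integrable_map_measure hgm.aestronglyMeasurable hX.aemeasurable).1 hgint
  -- conditional expectation identification
  have hXle : MeasurableSpace.comap X mE ≤ ‹MeasurableSpace Ω› := hX.comap_le
  haveI : SigmaFinite (P.trim hXle) := by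
    have h := isFiniteMeasure_trim hXle (μ := P)
    infer_instance
  have hcond : (fun ω => g (X ω)) =ᵐ[P]
      MeasureTheory.condExp (MeasurableSpace.comap X mE) P (Y i0) := by
    refine ae_eq_condExp_of_forall_setIntegral_eq hXle (hYint i0)
      (fun s _ _ => hgXint.integrableOn) (fun s hs _ => ?_) ?_
    · obtain ⟨A, hA, rfl⟩ := hs
      have h1 : ∫ ω in X ⁻¹' A, g (X ω) ∂P = ∫ x in A, g x ∂μ :=
        (setIntegral_map hA hgm.aestronglyMeasurable hX.aemeasurable).symm
      have h2 : ∫ x in A, g x ∂μ = ∫ z in A ×ˢ (Set.univ : Set E'), f z ∂(μ.prod ν) := by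
        rw [setIntegral_prod _ hfint.integrableOn]
        simp [g]
      have h3 : ∫ z in A ×ˢ (Set.univ : Set E'), f z ∂(μ.prod ν)
          = ∫ ω in X ⁻¹' A, Y i0 ω ∂P := by
        rw [← hpair i0, setIntegral_map (hA.prod MeasurableSet.univ)
          hf.aestronglyMeasurable (hX.prodMk (hX' i0)).aemeasurable]
        have hpre : (fun ω => (X ω, X' i0 ω)) ⁻¹' (A ×ˢ (Set.univ : Set E')) = X ⁻¹' A := by
          ext ω; simp
        rw [hpre]
        exact setIntegral_congr_ae (hX hA) (Eventually.of_forall fun ω _ => (hYdef i0 ω).symm)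
      rw [h1, h2, h3]
    · exact StronglyMeasurable.aestronglyMeasurable
        (hgm.comp_measurable (Measurable.of_comap_le le_rfl))
  -- integrability of the product of the Y i - m
  have hInt : Integrable (fun ω => ∏ i, (Y i ω - m)) P := by
    have hmeasP : Measurable fun ω => ∏ i, (Y i ω - m) :=
      Finset.measurable_prod _ fun i _ => (hYm i).sub measurable_const
    have hmaj : Integrable (fun ω => ∑ i, |Y i ω - m| ^ p) P := by
      refine integrable_finset_sum _ fun i _ => ?_
      have h1 := ((hYLp i).sub (memLp_const m)).integrable_norm_rpow
        (by exact_mod_cast (by omega : p ≠ 0)) (by simp)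
      have h2 : Integrable (fun ω => ‖Y i ω - m‖ ^ ((p : ℝ≥0∞)).toReal) P := by
        simpa [Pi.sub_apply] using h1
      have h3 : (fun ω => ‖Y i ω - m‖ ^ ((p : ℝ≥0∞)).toReal) = fun ω => |Y i ω - m| ^ p := by
        funext ω
        rw [ENNReal.toReal_natCast, Real.norm_eq_abs, Real.rpow_natCast]
      rwa [h3] at h2
    refine hmaj.mono' hmeasP.aestronglyMeasurable (Eventually.of_forall fun ω => ?_)
    obtain ⟨j, -, hj⟩ := Finset.exists_max_image Finset.univ (fun i => |Y i ω - m|)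
      ⟨i0, Finset.mem_univ i0⟩
    calc ‖∏ i, (Y i ω - m)‖ = ∏ i, |Y i ω - m| := by
          rw [Real.norm_eq_abs, Finset.abs_prod]
      _ ≤ ∏ _i : Fin p, |Y j ω - m| :=
          Finset.prod_le_prod (fun i _ => abs_nonneg _) (fun i hi => hj i hi)
      _ = |Y j ω - m| ^ p := by rw [Finset.prod_const, Finset.card_univ, Fintype.card_fin]
      _ ≤ ∑ i, |Y i ω - m| ^ p :=
          Finset.single_le_sum (f := fun i => |Y i ω - m| ^ p)
            (fun i _ => pow_nonneg (abs_nonneg _) _) (Finset.mem_univ j)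
  -- transfer RHS to the product space
  have hFm : Measurable fun z : E × (Fin p → E') => ∏ i, (f (z.1, z.2 i) - m) :=
    Finset.measurable_prod _ fun i _ =>
      (hf.comp (measurable_fst.prodMk ((measurable_pi_apply i).comp measurable_snd))).sub
        measurable_const
  have hcompeq : ((fun z : E × (Fin p → E') => ∏ i, (f (z.1, z.2 i) - m)) ∘ T2)
      = fun ω => ∏ i, (Y i ω - m) := by
    funext ω
    simp only [Function.comp_apply, T2, V]
    exact Finset.prod_congr rfl fun i _ => by rw [hYdef i ω]
  have hIntProd : Integrable (fun z : E × (Fin p → E') => ∏ i, (f (z.1, z.2 i) - m))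
      (μ.prod (Measure.pi fun _ : Fin p => ν)) := by
    rw [← hmapT2, integrable_map_measure hFm.aestronglyMeasurable hT2m.aemeasurable, hcompeq]
    exact hInt
  have hR1 : ∫ ω, ∏ i, (Y i ω - m) ∂P
      = ∫ z : E × (Fin p → E'), ∏ i, (f (z.1, z.2 i) - m)
          ∂(μ.prod (Measure.pi fun _ : Fin p => ν)) := by
    rw [← hmapT2, integral_map hT2m.aemeasurable hFm.aestronglyMeasurable]
    rw [show (fun ω => ∏ i, (f ((T2 ω).1, (T2 ω).2 i) - m)) = fun ω => ∏ i, (Y i ω - m) from hcompeq]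
  -- Fubini
  have hR2 : ∫ z : E × (Fin p → E'), ∏ i, (f (z.1, z.2 i) - m)
        ∂(μ.prod (Measure.pi fun _ : Fin p => ν))
      = ∫ x, ∫ v : Fin p → E', ∏ i, (f (x, v i) - m) ∂(Measure.pi fun _ : Fin p => ν) ∂μ :=
    integral_prod _ hIntProd
  -- inner integral
  have hinner : ∀ x : E, ∫ v : Fin p → E', ∏ i, (f (x, v i) - m)
      ∂(Measure.pi fun _ : Fin p => ν) = (∫ y, (f (x, y) - m) ∂ν) ^ p := by
    intro x
    letI : MeasureSpace E' := ⟨ν⟩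
    have h1 := MeasureTheory.integral_fintype_prod_eq_pow (𝕜 := ℝ) (ι := Fin p)
      (fun y => f (x, y) - m) (μ := ν)
    simpa [Fintype.card_fin, volume_pi] using h1
  have hae : ∀ᵐ x ∂μ, (∫ y, (f (x, y) - m) ∂ν) = g x - m := by
    filter_upwards [hfint.prod_right_ae] with x hx
    rw [integral_sub hx (integrable_const m), integral_const]
    simp [g]
  have hRHS : ∫ ω, ∏ i, (Y i ω - m) ∂P = ∫ x, (g x - m) ^ p ∂μ := by
    rw [hR1, hR2]
    refine integral_congr_ae ?_
    filter_upwards [hae] with x hx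
    rw [hinner x, hx]
  -- LHS
  have hLHS : ∫ ω, ((MeasureTheory.condExp (MeasurableSpace.comap X mE) P (Y i0)) ω - m) ^ p ∂P
      = ∫ x, (g x - m) ^ p ∂μ := by
    have h1 : ∫ ω, ((MeasureTheory.condExp (MeasurableSpace.comap X mE) P (Y i0)) ω - m) ^ p ∂P
        = ∫ ω, (g (X ω) - m) ^ p ∂P := by
      refine integral_congr_ae ?_
      filter_upwards [hcond] with ω hω
      rw [← hω]
    rw [h1, hμ, integral_map hX.aemeasurable]
    exact ((hgm.measurable.sub measurable_const).pow_const p).aestronglyMeasurable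
  rw [hLHS, hRHS]
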